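/- Let n ∈ ℝ³ be a unit vector and a ∈ ℝ³ with ‖a‖ ≤ 1, and let L(θ) = (n × a(θ))·σ. Then for every θ ∈ ℝ, the quantum Fisher information Tr[ρ_θ L(θ)²] equals ‖a‖² − (a·n)²; in particular it is independent of θ. -/
import Mathlib


open Matrix Complex

noncomputable section

/-- The Pauli matrices. -/
def σ1 : Matrix (Fin 2) (Fin 2) ℂ := !![0, 1; 1, 0]
def σ2 : Matrix (Fin 2) (Fin 2) ℂ := !![0, -Complex.I; Complex.I, 0]
def σ3 : Matrix (Fin 2) (Fin 2) ℂ := !![1, 0; 0, -1]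

/-- For `v ∈ ℝ³`, the matrix `v·σ = v₁σ₁ + v₂σ₂ + v₃σ₃`. -/
def pauliDot (v : Fin 3 → ℝ) : Matrix (Fin 2) (Fin 2) ℂ :=
  (v 0 : ℂ) • σ1 + (v 1 : ℂ) • σ2 + (v 2 : ℂ) • σ3

/-- The Euclidean norm on `ℝ³`. -/
def norm3 (v : Fin 3 → ℝ) : ℝ := Real.sqrt (v ⬝ᵥ v)

/-- The rotated Bloch vector
`a(θ) = cos θ · a + sin θ · (n × a) + 2 sin²(θ/2) (n·a) · n`. -/
def blochRot (n a : Fin 3 → ℝ) (θ : ℝ) : Fin 3 → ℝ :=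
  Real.cos θ • a + Real.sin θ • (crossProduct n a)
    + (2 * Real.sin (θ / 2) ^ 2 * (n ⬝ᵥ a)) • n

/-- The qubit state `ρ_θ = (1/2)(I + a(θ)·σ)`. -/
def qubitState (n a : Fin 3 → ℝ) (θ : ℝ) : Matrix (Fin 2) (Fin 2) ℂ :=
  (1 / 2 : ℂ) • (1 + pauliDot (blochRot n a θ))

/-- The symmetric logarithmic derivative `L(θ) = (n × a(θ))·σ`. -/
def sld (n a : Fin 3 → ℝ) (θ : ℝ) : Matrix (Fin 2) (Fin 2) ℂ :=
  pauliDot (crossProduct n (blochRot n a θ))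

lemma dot_self_nonneg3 (v : Fin 3 → ℝ) : 0 ≤ v ⬝ᵥ v :=
  Finset.sum_nonneg fun i _ => mul_self_nonneg (v i)

lemma pauli_sq (b : Fin 3 → ℝ) :
    (pauliDot b) ^ 2 = ((b ⬝ᵥ b : ℝ) : ℂ) • 1 := by
  have hI := Complex.I_sq
  ext i j
  fin_cases i <;> fin_cases j <;>
    simp [pauliDot, σ1, σ2, σ3, pow_two, Matrix.mul_apply, Fin.sum_univ_two,
      dotProduct, Fin.sum_univ_three, Matrix.one_apply] <;>
    push_cast <;> ring_nf <;> simp only [Complex.I_sq] <;> ring_nf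

lemma trace_qubitState (n a : Fin 3 → ℝ) (θ : ℝ) :
    Matrix.trace (qubitState n a θ) = 1 := by
  simp [qubitState, pauliDot, Matrix.trace, σ1, σ2, σ3, Fin.sum_univ_two,
    Matrix.one_apply]
  ring

lemma cos_half_identity (θ : ℝ) :
    Real.cos θ = 1 - 2 * Real.sin (θ / 2) ^ 2 := by
  have hc := Real.cos_two_mul' (θ / 2)
  have hθ : 2 * (θ / 2) = θ := by ring
  rw [hθ] at hc
  have := Real.sin_sq_add_cos_sq (θ / 2)
  linarith

lemma key_vec (n a : Fin 3 → ℝ) (hnn : n ⬝ᵥ n = 1) (θ : ℝ) :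
    (crossProduct n (blochRot n a θ)) ⬝ᵥ (crossProduct n (blochRot n a θ))
      = a ⬝ᵥ a - (a ⬝ᵥ n) ^ 2 := by
  have hc := cos_half_identity θ
  have hsc := Real.sin_sq_add_cos_sq θ
  have h1 : (crossProduct n a) ⬝ᵥ a = 0 := by
    rw [dotProduct_comm]; simp
  have h1' : a ⬝ᵥ (crossProduct n a) = 0 := by simp
  have h2 : (crossProduct n a) ⬝ᵥ n = 0 := by
    rw [dotProduct_comm]; simp
  have h2' : n ⬝ᵥ (crossProduct n a) = 0 := by simp
  have h4 : n ⬝ᵥ a = a ⬝ᵥ n := dotProduct_comm n a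
  have h3 : (crossProduct n a) ⬝ᵥ (crossProduct n a)
      = a ⬝ᵥ a - (a ⬝ᵥ n) ^ 2 := by
    rw [cross_dot_cross, hnn, one_mul, h4]
    ring
  have hnA : n ⬝ᵥ (blochRot n a θ) = a ⬝ᵥ n := by
    rw [blochRot]
    simp only [dotProduct_add, dotProduct_smul, smul_eq_mul,
      h2', hnn, h4, mul_zero, mul_one]
    linear_combination (a ⬝ᵥ n) * hc
  have hAn : (blochRot n a θ) ⬝ᵥ n = a ⬝ᵥ n := by
    rw [dotProduct_comm]; exact hnA
  have hAA : (blochRot n a θ) ⬝ᵥ (blochRot n a θ) = a ⬝ᵥ a := by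
    rw [blochRot]
    simp only [dotProduct_add, add_dotProduct,
      dotProduct_smul, smul_dotProduct, smul_eq_mul,
      h1, h1', h2, h2', hnn, h3, h4, mul_zero, zero_mul, mul_one, add_zero,
      zero_add]
    linear_combination (a ⬝ᵥ a - (a ⬝ᵥ n) ^ 2) * hsc
      + ((a ⬝ᵥ n) ^ 2 * (Real.cos θ + 1 + 2 * Real.sin (θ / 2) ^ 2)) * hc
  rw [cross_dot_cross, hnn, one_mul, hnA, hAn, hAA]
  ring

/-- the quantum Fisher information `Tr[ρ_θ L(θ)²]` equals
`‖a‖² − (a·n)²`, independently of `θ`. -/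
theorem quantum_fisher_information_eq
    (n a : Fin 3 → ℝ) (hn : norm3 n = 1) (ha : norm3 a ≤ 1) (θ : ℝ) :
    Matrix.trace (qubitState n a θ * (sld n a θ) ^ 2)
      = ((norm3 a ^ 2 - (a ⬝ᵥ n) ^ 2 : ℝ) : ℂ) := by
  have hnn : n ⬝ᵥ n = 1 := by
    have := hn
    rw [norm3, Real.sqrt_eq_one] at this
    exact this
  have haa : norm3 a ^ 2 = a ⬝ᵥ a := Real.sq_sqrt (dot_self_nonneg3 a)
  rw [sld, pauli_sq, Matrix.mul_smul, Matrix.mul_one, Matrix.trace_smul,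
    smul_eq_mul, trace_qubitState, mul_one, key_vec n a hnn θ, haa]

end
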